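/- Let n ≥ 2 and let f be the rotation map f(x) = (x₁ cos θ − x₂ sin θ, x₂ cos θ + x₁ sin θ, x₃, …, xₙ) with θ = log(x₁² + x₂²). Then at every point x with x₁² + x₂² > 0, f is differentiable and its Jacobian determinant equals 1, i.e. det f′(x) = 1 (f preserves volume). -/

import Mathlib

set_option maxHeartbeats 1000000

open Metric

/-- The rotation map
`f(x) = (x₁ cos θ − x₂ sin θ, x₂ cos θ + x₁ sin θ, x₃, …, xₙ)` with
`θ = log (x₁² + x₂²)`. -/
noncomputable def rotMap (n : ℕ) (hn : 2 ≤ n)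
    (x : EuclideanSpace ℝ (Fin n)) : EuclideanSpace ℝ (Fin n) :=
  (WithLp.equiv 2 (Fin n → ℝ)).symm fun i =>
    let θ : ℝ := Real.log (x ⟨0, by omega⟩ ^ 2 + x ⟨1, by omega⟩ ^ 2)
    if (i : ℕ) = 0 then
      x ⟨0, by omega⟩ * Real.cos θ - x ⟨1, by omega⟩ * Real.sin θ
    else if (i : ℕ) = 1 then
      x ⟨1, by omega⟩ * Real.cos θ + x ⟨0, by omega⟩ * Real.sin θ
    else x i




lemma det_aux (n : ℕ) (hn : 2 ≤ n) (a b c d : ℝ) :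
    (Matrix.of fun i j : Fin n =>
      if (i : ℕ) = 0 then (if (j : ℕ) = 0 then a else if (j : ℕ) = 1 then b else 0)
      else if (i : ℕ) = 1 then (if (j : ℕ) = 0 then c else if (j : ℕ) = 1 then d else 0)
      else if i = j then (1 : ℝ) else 0).det = a * d - b * c := by
  have h : 2 + (n - 2) = n := by omega
  let e : Fin 2 ⊕ Fin (n - 2) ≃ Fin n := finSumFinEquiv.trans (finCongr h)
  have he1 : ∀ i : Fin 2, ((e (Sum.inl i) : Fin n) : ℕ) = (i : ℕ) := by
    intro i; simp [e, finCongr]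
  have he2 : ∀ j : Fin (n - 2), ((e (Sum.inr j) : Fin n) : ℕ) = 2 + (j : ℕ) := by
    intro j; simp [e, finCongr]
  rw [← Matrix.det_submatrix_equiv_self e]
  have hsub : (Matrix.of fun i j : Fin n =>
      if (i : ℕ) = 0 then (if (j : ℕ) = 0 then a else if (j : ℕ) = 1 then b else 0)
      else if (i : ℕ) = 1 then (if (j : ℕ) = 0 then c else if (j : ℕ) = 1 then d else 0)
      else if i = j then (1 : ℝ) else 0).submatrix e e =
      Matrix.fromBlocks !![a, b; c, d] 0 0 (1 : Matrix (Fin (n - 2)) (Fin (n - 2)) ℝ) := by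
    ext i j
    cases i with
    | inl i =>
      cases j with
      | inl j =>
        fin_cases i <;> fin_cases j <;>
          simp [Matrix.submatrix_apply, he1, Matrix.fromBlocks]
      | inr j =>
        have hj := he2 j
        fin_cases i <;>
          simp_all [Matrix.submatrix_apply, Matrix.fromBlocks, Fin.ext_iff] <;> omega
    | inr i =>
      have hi := he2 i
      cases j with
      | inl j =>
        have hj := he1 j
        have hj2 := j.isLt
        simp only [Matrix.submatrix_apply, Matrix.of_apply, Matrix.fromBlocks, Sum.elim_inr, Sum.elim_inl, hi, Matrix.zero_apply]
        rw [if_neg (by omega), if_neg (by omega), if_neg (fun h => by rw [Fin.ext_iff, hi, hj] at h; omega)]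
      | inr j =>
        have hj := he2 j
        simp only [Matrix.submatrix_apply, Matrix.of_apply, Matrix.fromBlocks,
          Matrix.one_apply, Sum.elim_inr, hi]
        rw [if_neg (by omega), if_neg (by omega)]
        simp [e.apply_eq_iff_eq]
  rw [hsub, Matrix.det_fromBlocks_zero₂₁, Matrix.det_one, mul_one, Matrix.det_fin_two_of]

open ContinuousLinearMap in
theorem gAux_deriv (n : ℕ) (hn : 2 ≤ n) (y : Fin n → ℝ)
    (hy : 0 < y ⟨0, by omega⟩ ^ 2 + y ⟨1, by omega⟩ ^ 2) :
    ∃ G : (Fin n → ℝ) →L[ℝ] (Fin n → ℝ),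
      HasFDerivAt (fun w : Fin n → ℝ => fun i : Fin n =>
        if (i : ℕ) = 0 then
          w ⟨0, by omega⟩ * Real.cos (Real.log (w ⟨0, by omega⟩ ^ 2 + w ⟨1, by omega⟩ ^ 2))
            - w ⟨1, by omega⟩ * Real.sin (Real.log (w ⟨0, by omega⟩ ^ 2 + w ⟨1, by omega⟩ ^ 2))
        else if (i : ℕ) = 1 then
          w ⟨1, by omega⟩ * Real.cos (Real.log (w ⟨0, by omega⟩ ^ 2 + w ⟨1, by omega⟩ ^ 2))
            + w ⟨0, by omega⟩ * Real.sin (Real.log (w ⟨0, by omega⟩ ^ 2 + w ⟨1, by omega⟩ ^ 2))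
        else w i) G y ∧
      LinearMap.det (G : (Fin n → ℝ) →ₗ[ℝ] (Fin n → ℝ)) = 1 := by
  classical
  set i0 : Fin n := ⟨0, by omega⟩ with hi0def
  set i1 : Fin n := ⟨1, by omega⟩ with hi1def
  have hne : i0 ≠ i1 := by simp [i0, i1, Fin.ext_iff]
  set u : ℝ := y i0 with hu
  set v : ℝ := y i1 with hv
  have hr0 : u ^ 2 + v ^ 2 ≠ 0 := ne_of_gt hy
  set θ : ℝ := Real.log (u ^ 2 + v ^ 2) with hθ
  set sθ : ℝ := Real.sin θ with hs
  set cθ : ℝ := Real.cos θ with hc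
  set p0 : (Fin n → ℝ) →L[ℝ] ℝ := proj i0 with hp0
  set p1 : (Fin n → ℝ) →L[ℝ] ℝ := proj i1 with hp1
  set Dθ : (Fin n → ℝ) →L[ℝ] ℝ := (u ^ 2 + v ^ 2)⁻¹ • ((2 * u) • p0 + (2 * v) • p1) with hDθ
  -- derivative of θ
  have hsum : HasFDerivAt (fun w : Fin n → ℝ => w i0 ^ 2 + w i1 ^ 2)
      ((2 * u) • p0 + (2 * v) • p1) y := by
    have heq : ((2 * u) • p0 + (2 * v) • p1 : (Fin n → ℝ) →L[ℝ] ℝ) =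
        y i0 • proj i0 + y i0 • proj i0 + (y i1 • proj i1 + y i1 • proj i1) := by
      ext w; simp [hp0, hp1]; ring
    rw [show (fun w : Fin n → ℝ => w i0 ^ 2 + w i1 ^ 2)
        = fun w => w i0 * w i0 + w i1 * w i1 from by funext w; ring, heq]
    exact ((hasFDerivAt_apply (𝕜 := ℝ) i0 y).mul (hasFDerivAt_apply (𝕜 := ℝ) i0 y)).add
      ((hasFDerivAt_apply (𝕜 := ℝ) i1 y).mul (hasFDerivAt_apply (𝕜 := ℝ) i1 y))
  have hθ' : HasFDerivAt (fun w : Fin n → ℝ => Real.log (w i0 ^ 2 + w i1 ^ 2)) Dθ y :=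
    by exact (Real.hasDerivAt_log hr0).comp_hasFDerivAt y hsum
  have hcos : HasFDerivAt (fun w : Fin n → ℝ => Real.cos (Real.log (w i0 ^ 2 + w i1 ^ 2)))
      ((-sθ) • Dθ) y := by exact (Real.hasDerivAt_cos θ).comp_hasFDerivAt y hθ'
  have hsin : HasFDerivAt (fun w : Fin n → ℝ => Real.sin (Real.log (w i0 ^ 2 + w i1 ^ 2)))
      (cθ • Dθ) y := by exact (Real.hasDerivAt_sin θ).comp_hasFDerivAt y hθ'
  set D0 : (Fin n → ℝ) →L[ℝ] ℝ := u • ((-sθ) • Dθ) + cθ • p0 - (v • (cθ • Dθ) + sθ • p1)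
    with hD0
  set D1 : (Fin n → ℝ) →L[ℝ] ℝ := v • ((-sθ) • Dθ) + cθ • p1 + (u • (cθ • Dθ) + sθ • p0)
    with hD1
  have hf0 : HasFDerivAt (fun w : Fin n → ℝ =>
      w i0 * Real.cos (Real.log (w i0 ^ 2 + w i1 ^ 2))
        - w i1 * Real.sin (Real.log (w i0 ^ 2 + w i1 ^ 2))) D0 y :=
    ((hasFDerivAt_apply (𝕜 := ℝ) i0 y).mul hcos).sub ((hasFDerivAt_apply (𝕜 := ℝ) i1 y).mul hsin)
  have hf1 : HasFDerivAt (fun w : Fin n → ℝ =>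
      w i1 * Real.cos (Real.log (w i0 ^ 2 + w i1 ^ 2))
        + w i0 * Real.sin (Real.log (w i0 ^ 2 + w i1 ^ 2))) D1 y :=
    ((hasFDerivAt_apply (𝕜 := ℝ) i1 y).mul hcos).add ((hasFDerivAt_apply (𝕜 := ℝ) i0 y).mul hsin)
  set D : ∀ _ : Fin n, (Fin n → ℝ) →L[ℝ] ℝ :=
    fun i => if (i : ℕ) = 0 then D0 else if (i : ℕ) = 1 then D1 else proj i with hD
  refine ⟨ContinuousLinearMap.pi D, ?_, ?_⟩
  · apply hasFDerivAt_pi''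
    intro i
    rw [proj_pi]
    by_cases h0 : (i : ℕ) = 0
    · simp only [hD, if_pos h0]
      convert hf0 using 2
    · by_cases h1 : (i : ℕ) = 1
      · simp only [hD, if_neg h0, if_pos h1]
        convert hf1 using 2
      · simp only [hD, if_neg h0, if_neg h1]
        convert hasFDerivAt_apply (𝕜 := ℝ) i y using 2
  · rw [← LinearMap.det_toMatrix']
    have hM : LinearMap.toMatrix' ((ContinuousLinearMap.pi D : (Fin n → ℝ) →L[ℝ] (Fin n → ℝ)) :
        (Fin n → ℝ) →ₗ[ℝ] (Fin n → ℝ)) = Matrix.of fun i j : Fin n =>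
        if (i : ℕ) = 0 then
          (if (j : ℕ) = 0 then u * -sθ * (2*u/(u^2+v^2)) + cθ - v * cθ * (2*u/(u^2+v^2))
           else if (j : ℕ) = 1 then u * -sθ * (2*v/(u^2+v^2)) - (v * cθ * (2*v/(u^2+v^2)) + sθ)
           else 0)
        else if (i : ℕ) = 1 then
          (if (j : ℕ) = 0 then v * -sθ * (2*u/(u^2+v^2)) + (u * cθ * (2*u/(u^2+v^2)) + sθ)
           else if (j : ℕ) = 1 then v * -sθ * (2*v/(u^2+v^2)) + cθ + u * cθ * (2*v/(u^2+v^2))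
           else 0)
        else if i = j then (1 : ℝ) else 0 := by
      ext i j
      rw [LinearMap.toMatrix'_apply]
      have happ : ∀ k : Fin n, (fun j' : Fin n => if j' = j then (1:ℝ) else 0) k
          = if k = j then (1:ℝ) else 0 := fun _ => rfl
      by_cases h0 : (i : ℕ) = 0
      · by_cases hj0 : (j : ℕ) = 0
        · have : j = i0 := by simp [i0, Fin.ext_iff, hj0]
          subst this
          simp [hD, h0, hD0, hDθ, hp0, hp1, hne, hne.symm, div_eq_mul_inv, hj0]
          ring
        · by_cases hj1 : (j : ℕ) = 1
          · have : j = i1 := by simp [i1, Fin.ext_iff, hj1]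
            subst this
            simp [hD, h0, hD0, hDθ, hp0, hp1, hne, hne.symm, div_eq_mul_inv, hj1]
            ring
          · have hji0 : i0 ≠ j := by simp [i0, Fin.ext_iff]; omega
            have hji1 : i1 ≠ j := by simp [i1, Fin.ext_iff]; omega
            simp [hD, h0, hj0, hj1, hD0, hDθ, hp0, hp1, hji0, hji1]
      · by_cases h1 : (i : ℕ) = 1
        · by_cases hj0 : (j : ℕ) = 0
          · have : j = i0 := by simp [i0, Fin.ext_iff, hj0]
            subst this
            simp [hD, h0, h1, hD1, hDθ, hp0, hp1, hne, hne.symm, div_eq_mul_inv, hj0]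
            ring
          · by_cases hj1 : (j : ℕ) = 1
            · have : j = i1 := by simp [i1, Fin.ext_iff, hj1]
              subst this
              simp [hD, h0, h1, hD1, hDθ, hp0, hp1, hne, hne.symm, div_eq_mul_inv, hj1]
              ring
            · have hji0 : i0 ≠ j := by simp [i0, Fin.ext_iff]; omega
              have hji1 : i1 ≠ j := by simp [i1, Fin.ext_iff]; omega
              simp [hD, h0, h1, hj0, hj1, hD1, hDθ, hp0, hp1, hji0, hji1]
        · simp [hD, h0, h1, Pi.single_apply]
    rw [hM, det_aux n hn]
    have hsc := Real.sin_sq_add_cos_sq θ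
    rw [← hs, ← hc] at hsc
    field_simp
    linear_combination ((u ^ 2 + v ^ 2) ^ 2) * hsc

theorem rotMap_volume_preserving (n : ℕ) (hn : 2 ≤ n)
    (x : EuclideanSpace ℝ (Fin n))
    (hx : 0 < x ⟨0, by omega⟩ ^ 2 + x ⟨1, by omega⟩ ^ 2) :
    DifferentiableAt ℝ (rotMap n hn) x ∧
    LinearMap.det ((fderiv ℝ (rotMap n hn) x :
      EuclideanSpace ℝ (Fin n) →ₗ[ℝ] EuclideanSpace ℝ (Fin n))) = 1 := by
  set e : EuclideanSpace ℝ (Fin n) ≃L[ℝ] (Fin n → ℝ) := EuclideanSpace.equiv (Fin n) ℝ with he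
  obtain ⟨G, hG, hdet⟩ := gAux_deriv n hn (e x) hx
  have h2 := hG.comp x (e.toContinuousLinearMap.hasFDerivAt (x := x))
  have h3 := (e.symm.toContinuousLinearMap.hasFDerivAt).comp x h2
  have h1 : HasFDerivAt (rotMap n hn)
      ((e.symm.toContinuousLinearMap).comp (G.comp e.toContinuousLinearMap)) x := h3
  refine ⟨h1.differentiableAt, ?_⟩
  rw [h1.fderiv]
  have hcoe : (((e.symm.toContinuousLinearMap).comp (G.comp e.toContinuousLinearMap) :
        EuclideanSpace ℝ (Fin n) →L[ℝ] EuclideanSpace ℝ (Fin n)) :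
        EuclideanSpace ℝ (Fin n) →ₗ[ℝ] EuclideanSpace ℝ (Fin n)) =
      (e.symm.toLinearEquiv : (Fin n → ℝ) →ₗ[ℝ] EuclideanSpace ℝ (Fin n)) ∘ₗ
        (G : (Fin n → ℝ) →ₗ[ℝ] (Fin n → ℝ)) ∘ₗ
        (e.symm.toLinearEquiv.symm : EuclideanSpace ℝ (Fin n) →ₗ[ℝ] (Fin n → ℝ)) := rfl
  rw [hcoe, LinearMap.det_conj, hdet]
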